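/- Let S denote the double sum S = ∑_{(a,b) ∈ 𝔽_p × 𝔽_p} ( a·(1+b+a)·∏_{i=1}^{3}(α_i² + α_i·b + a) )^{(p−1)/2} ∈ 𝔽_p. Then, with F a finite field with p² elements, f̃ the image of f in F[X], and ι : 𝔽_p → F the canonical embedding, 2·ι(S) = ∑_{α ∈ F} ( f̃(α)·f̃(α^p) )^{(p−1)/2} + ι( ∑_{(α,β) ∈ 𝔽_p × 𝔽_p} ( f(α)·f(β) )^{(p−1)/2} ). (Equivalently, S equals one half of the sum of these two character-type sums; the terms of S indexed by (a,b) are the values ∏_{c ∈ {0,1,α₁,α₂,α₃}} q(c)^{(p−1)/2} for the monic quadratic q(x) = x² + bx + a.) -/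

import Mathlib

open Polynomial Finset

-- Lemma A: elements fixed by x ↦ x^p are in the image of ι
lemma fix_mem_range {p : ℕ} [Fact p.Prime] {F : Type*} [Field F] [Fintype F]
    [DecidableEq F] (ι : ZMod p →+* F) (u : F) (hu : u ^ p = u) :
    ∃ c : ZMod p, ι c = u := by
  classical
  have hp1 : 1 < p := (Fact.out : p.Prime).one_lt
  set Fix : Finset F := univ.filter (fun x => x ^ p = x) with hFix
  set Img : Finset F := univ.image ι with hImg
  have hsub : Img ⊆ Fix := by
    intro x hx
    simp only [hImg, mem_image] at hx
    obtain ⟨c, _, rfl⟩ := hx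
    simp only [hFix, mem_filter, mem_univ, true_and]
    rw [← map_pow, ZMod.pow_card]
  have hcardImg : Img.card = p := by
    rw [hImg, Finset.card_image_of_injective _ ι.injective, card_univ, ZMod.card]
  have hcardFix : Fix.card ≤ p := by
    have hne : (X ^ p - X : F[X]) ≠ 0 := by
      intro h
      have := Polynomial.degree_sub_eq_left_of_degree_lt
        (by rw [Polynomial.degree_X_pow, Polynomial.degree_X]; exact_mod_cast hp1 :
          (X : F[X]).degree < (X ^ p : F[X]).degree)
      rw [h] at this
      simp [Polynomial.degree_X_pow] at this
    have hdeg : (X ^ p - X : F[X]).natDegree = p := by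
      have := Polynomial.degree_sub_eq_left_of_degree_lt
        (by rw [Polynomial.degree_X_pow, Polynomial.degree_X]; exact_mod_cast hp1 :
          (X : F[X]).degree < (X ^ p : F[X]).degree)
      have := Polynomial.natDegree_eq_of_degree_eq_some (by rw [this, Polynomial.degree_X_pow])
      simpa using this
    have hsub2 : Fix ⊆ (X ^ p - X : F[X]).roots.toFinset := by
      intro x hx
      simp only [hFix, mem_filter, mem_univ, true_and] at hx
      rw [Multiset.mem_toFinset, Polynomial.mem_roots hne]
      simp [Polynomial.IsRoot, hx]
    calc Fix.card ≤ _ := Finset.card_le_card hsub2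
      _ ≤ (X ^ p - X : F[X]).roots.card := Multiset.toFinset_card_le _
      _ ≤ _ := Polynomial.card_roots' _
      _ = p := hdeg
  have heq : Img = Fix := Finset.eq_of_subset_of_card_le hsub (by omega)
  have : u ∈ Fix := by simp [hFix, hu]
  rw [← heq, hImg, mem_image] at this
  obtain ⟨c, _, hc⟩ := this
  exact ⟨c, hc⟩

-- every element of the prime field is a square in F (card F = p^2)
lemma exists_sqrt {p : ℕ} [Fact p.Prime] (hp2 : p ≠ 2) {F : Type*} [Field F] [Fintype F]
    (hF : Fintype.card F = p ^ 2) (ι : ZMod p →+* F) (d : ZMod p) :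
    ∃ s : F, s ^ 2 = ι d := by
  haveI : CharP F p := charP_of_injective_ringHom ι.injective p
  rcases eq_or_ne d 0 with rfl | hd
  · exact ⟨0, by simp⟩
  have hx : ι d ≠ 0 := fun h => hd (ι.injective (by simpa using h))
  have hodd : Odd p := (Fact.out : p.Prime).odd_of_ne_two hp2
  have hchar : ringChar F ≠ 2 := by
    rw [ringChar.eq F p]; exact hp2
  have hdiv : Fintype.card F / 2 = (p - 1) * ((p + 1) / 2) := by
    obtain ⟨m, rfl⟩ := hodd
    rw [hF]
    have h1 : (2 * m + 1) ^ 2 = (2 * m ^ 2 + 2 * m) * 2 + 1 := by ring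
    have h2 : (2 * m + 1 + 1) / 2 = m + 1 := by omega
    have h3 : (2 * m + 1 - 1) * ((2 * m + 1 + 1) / 2) = 2 * m ^ 2 + 2 * m := by
      rw [h2]
      have h4 : 2 * m + 1 - 1 = 2 * m := by omega
      rw [h4]; ring
    omega
  have hpow : ι d ^ (Fintype.card F / 2) = 1 := by
    rw [hdiv, pow_mul, ← map_pow, ZMod.pow_card_sub_one_eq_one hd, map_one, one_pow]
  obtain ⟨r, hr⟩ := (FiniteField.isSquare_iff hchar hx).mpr hpow
  exact ⟨r, by rw [hr]; ring⟩

lemma fiber_count {p : ℕ} [Fact p.Prime] (hp2 : p ≠ 2) {F : Type*} [Field F] [Fintype F]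
    [DecidableEq F] (hF : Fintype.card F = p ^ 2) (ι : ZMod p →+* F) (a b : ZMod p) :
    (univ.filter fun α : F => α * α ^ p = ι a ∧ α + α ^ p = ι b).card
      + (univ.filter fun z : ZMod p × ZMod p => z.1 * z.2 = a ∧ z.1 + z.2 = b).card = 2 := by
  classical
  haveI : CharP F p := charP_of_injective_ringHom ι.injective p
  have two_ne : (2 : ZMod p) ≠ 0 := by
    intro h
    have h2 : ((2 : ℕ) : ZMod p) = 0 := by exact_mod_cast h
    rw [ZMod.natCast_eq_zero_iff] at h2
    exact hp2 (((Nat.prime_dvd_prime_iff_eq Fact.out Nat.prime_two).mp h2))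
  have two_ne_F : (2 : F) ≠ 0 := by
    intro h
    apply two_ne
    apply ι.injective
    rw [map_ofNat, map_zero, h]
  have hιfix : ∀ c : ZMod p, (ι c) ^ p = ι c := fun c => by rw [← map_pow, ZMod.pow_card]
  set d := b ^ 2 - 4 * a with hd_def
  by_cases hd : ∃ t : ZMod p, t ^ 2 = d
  · obtain ⟨t, ht⟩ := hd
    have ht' : t ^ 2 = b ^ 2 - 4 * a := by rw [ht, hd_def]
    set x₁ := (b + t) * (2 : ZMod p)⁻¹ with hx1
    set x₂ := (b - t) * (2 : ZMod p)⁻¹ with hx2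
    have hx_sum : x₁ + x₂ = b := by rw [hx1, hx2]; field_simp; ring
    have hx_mul : x₁ * x₂ = a := by
      rw [hx1, hx2]; field_simp; linear_combination -ht'
    have hset2 : (univ.filter fun z : ZMod p × ZMod p => z.1 * z.2 = a ∧ z.1 + z.2 = b)
        = {(x₁, x₂), (x₂, x₁)} := by
      ext ⟨u, v⟩
      simp only [mem_filter, mem_univ, true_and, mem_insert, mem_singleton, Prod.mk.injEq]
      constructor
      · rintro ⟨h1, h2⟩
        have key : (u - v - t) * (u - v + t) = 0 := by
          linear_combination (u + v + b) * h2 - ht' - 4 * h1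
        rcases mul_eq_zero.mp key with h | h
        · left
          constructor
          · rw [hx1]; field_simp; linear_combination h + h2
          · rw [hx2]; field_simp; linear_combination h2 - h
        · right
          constructor
          · rw [hx2]; field_simp; linear_combination h + h2
          · rw [hx1]; field_simp; linear_combination h2 - h
      · rintro (⟨rfl, rfl⟩ | ⟨rfl, rfl⟩)
        · exact ⟨hx_mul, hx_sum⟩
        · exact ⟨by rw [mul_comm]; exact hx_mul, by rw [add_comm]; exact hx_sum⟩
    have hfac : ∀ α : F, α * α ^ p = ι a → α + α ^ p = ι b → α = ι x₁ ∨ α = ι x₂ := by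
      intro α h1 h2
      have e1 : ι x₁ + ι x₂ = ι b := by rw [← map_add, hx_sum]
      have e2 : ι x₁ * ι x₂ = ι a := by rw [← map_mul, hx_mul]
      have key : (α - ι x₁) * (α - ι x₂) = 0 := by
        linear_combination -h1 + α * h2 - α * e1 + e2
      rcases mul_eq_zero.mp key with h | h
      · exact Or.inl (sub_eq_zero.mp h)
      · exact Or.inr (sub_eq_zero.mp h)
    by_cases ht0 : t = 0
    · subst ht0
      have hx12 : x₁ = x₂ := by rw [hx1, hx2]; ring
      have hset1 : (univ.filter fun α : F => α * α ^ p = ι a ∧ α + α ^ p = ι b) = {ι x₁} := by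
        ext α
        simp only [mem_filter, mem_univ, true_and, mem_singleton]
        constructor
        · rintro ⟨h1, h2⟩
          rcases hfac α h1 h2 with h | h
          · exact h
          · rw [h, ← hx12]
        · rintro rfl
          refine ⟨?_, ?_⟩
          · rw [hιfix, ← map_mul]
            congr 1
            rw [hx12] at hx_mul ⊢
            exact hx_mul
          · rw [hιfix, ← map_add]
            congr 1
            rw [hx12] at hx_sum ⊢
            exact hx_sum
      rw [hset1, hset2, hx12]
      simp
    · have hx12 : x₁ ≠ x₂ := by
        intro h
        rw [hx1, hx2] at h
        have h2 := mul_right_cancel₀ (inv_ne_zero two_ne) h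
        have h3 : (2 : ZMod p) * t = 0 := by linear_combination h2
        rcases mul_eq_zero.mp h3 with h4 | h4
        · exact two_ne h4
        · exact ht0 h4
      have hset1 : (univ.filter fun α : F => α * α ^ p = ι a ∧ α + α ^ p = ι b) = ∅ := by
        rw [Finset.filter_eq_empty_iff]
        rintro α - ⟨h1, h2⟩
        rcases hfac α h1 h2 with h | h
        · subst h
          rw [hιfix, ← map_add] at h2
          have := ι.injective h2
          exact hx12 (by linear_combination this - hx_sum)
        · subst h
          rw [hιfix, ← map_add] at h2
          have := ι.injective h2
          exact hx12 (by linear_combination hx_sum - this)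
      rw [hset1, hset2]
      rw [Finset.card_empty, Finset.card_pair (by simp [Prod.ext_iff]; intro h; exact absurd h hx12)]
  · have hd0 : d ≠ 0 := fun h => hd ⟨0, by rw [h]; ring⟩
    have hset2 : (univ.filter fun z : ZMod p × ZMod p => z.1 * z.2 = a ∧ z.1 + z.2 = b) = ∅ := by
      rw [Finset.filter_eq_empty_iff]
      rintro z - ⟨h1, h2⟩
      exact hd ⟨z.1 - z.2, by linear_combination (z.1 + z.2 + b) * h2 - 4 * h1 - hd_def⟩
    obtain ⟨s, hs⟩ := exists_sqrt hp2 hF ι d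
    have hs0 : s ≠ 0 := by
      rintro rfl
      apply hd0
      apply ι.injective
      rw [map_zero, ← hs]
      ring
    have hsp : s ^ p = -s := by
      have hsq : (s ^ p) ^ 2 = s ^ 2 := by
        rw [← pow_mul, mul_comm p 2, pow_mul, hs, ← map_pow, ZMod.pow_card]
      have h2 : (s ^ p - s) * (s ^ p + s) = 0 := by linear_combination hsq
      rcases mul_eq_zero.mp h2 with h | h
      · exfalso
        obtain ⟨c, hc⟩ := fix_mem_range ι s (sub_eq_zero.mp h)
        apply hd
        refine ⟨c, ι.injective ?_⟩
        rw [map_pow, hc, hs]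
      · linear_combination h
    set r₁ : F := (ι b + s) * (2 : F)⁻¹ with hr1
    set r₂ : F := (ι b - s) * (2 : F)⁻¹ with hr2
    have hr_sum : r₁ + r₂ = ι b := by rw [hr1, hr2]; field_simp; ring
    have hιd : ι d = (ι b) ^ 2 - 4 * ι a := by
      rw [hd_def, map_sub, map_mul, map_pow, map_ofNat]
    have hr_mul : r₁ * r₂ = ι a := by
      rw [hr1, hr2]; field_simp; linear_combination -hs - hιd
    have h2F : (2 : F) ^ p = 2 := by
      rw [show (2 : F) = ι 2 by rw [map_ofNat], ← map_pow, ZMod.pow_card]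
    have h2inv : ((2 : F)⁻¹) ^ p = (2 : F)⁻¹ := by rw [inv_pow, h2F]
    have hr1p : r₁ ^ p = r₂ := by
      rw [hr1, hr2, mul_pow, add_pow_char, hιfix, hsp, h2inv, ← sub_eq_add_neg]
    have hr2p : r₂ ^ p = r₁ := by
      rw [hr1, hr2, mul_pow, sub_pow_char, hιfix, hsp, h2inv, sub_neg_eq_add]
    have hr12 : r₁ ≠ r₂ := by
      intro h
      rw [hr1, hr2] at h
      have h2 := mul_right_cancel₀ (inv_ne_zero two_ne_F) h
      have h3 : (2 : F) * s = 0 := by linear_combination h2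
      rcases mul_eq_zero.mp h3 with h4 | h4
      · exact two_ne_F h4
      · exact hs0 h4
    have hset1 : (univ.filter fun α : F => α * α ^ p = ι a ∧ α + α ^ p = ι b) = {r₁, r₂} := by
      ext α
      simp only [mem_filter, mem_univ, true_and, mem_insert, mem_singleton]
      constructor
      · rintro ⟨h1, h2⟩
        have key : (α - r₁) * (α - r₂) = 0 := by
          linear_combination -h1 + α * h2 - α * hr_sum + hr_mul
        rcases mul_eq_zero.mp key with h | h
        · exact Or.inl (sub_eq_zero.mp h)
        · exact Or.inr (sub_eq_zero.mp h)
      · rintro (rfl | rfl)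
        · rw [hr1p]
          exact ⟨hr_mul, hr_sum⟩
        · rw [hr2p]
          exact ⟨by rw [mul_comm]; exact hr_mul, by rw [add_comm]; exact hr_sum⟩
    rw [hset1, hset2, Finset.card_empty, Finset.card_pair hr12]

lemma sum_reduce {p : ℕ} [Fact p.Prime] (hp2 : p ≠ 2) {F : Type*} [Field F] [Fintype F]
    [DecidableEq F] (hF : Fintype.card F = p ^ 2) (ι : ZMod p →+* F) (K : F → F → F) :
    (∑ α : F, K (α * α ^ p) (α + α ^ p))
      + (∑ z : ZMod p × ZMod p, K (ι (z.1 * z.2)) (ι (z.1 + z.2)))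
      = ∑ z : ZMod p × ZMod p, 2 * K (ι z.1) (ι z.2) := by
  classical
  haveI : CharP F p := charP_of_injective_ringHom ι.injective p
  have hcard : ∀ α : F, α ^ (p * p) = α := by
    intro α
    rw [show p * p = p ^ 2 by ring, ← hF, FiniteField.pow_card]
  have hmulfix : ∀ α : F, (α * α ^ p) ^ p = α * α ^ p := by
    intro α
    rw [mul_pow, ← pow_mul, hcard, mul_comm]
  have haddfix : ∀ α : F, (α + α ^ p) ^ p = α + α ^ p := by
    intro α
    rw [add_pow_char, ← pow_mul, hcard, add_comm]
  set π : F → ZMod p × ZMod p := fun α =>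
    (Function.invFun ι (α * α ^ p), Function.invFun ι (α + α ^ p)) with hπ
  have hπ1 : ∀ α : F, ι (π α).1 = α * α ^ p := by
    intro α
    obtain ⟨c, hc⟩ := fix_mem_range ι _ (hmulfix α)
    exact Function.invFun_eq ⟨c, hc⟩
  have hπ2 : ∀ α : F, ι (π α).2 = α + α ^ p := by
    intro α
    obtain ⟨c, hc⟩ := fix_mem_range ι _ (haddfix α)
    exact Function.invFun_eq ⟨c, hc⟩
  have key1 : (∑ α : F, K (α * α ^ p) (α + α ^ p))
      = ∑ w : ZMod p × ZMod p,
          ((univ.filter fun α : F => π α = w).card) • K (ι w.1) (ι w.2) := by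
    rw [← Finset.sum_fiberwise univ π (fun α => K (α * α ^ p) (α + α ^ p))]
    refine Finset.sum_congr rfl fun w _ => ?_
    rw [Finset.sum_congr rfl (fun α hα => ?_), Finset.sum_const]
    have hw : π α = w := (Finset.mem_filter.mp hα).2
    rw [← hπ1 α, ← hπ2 α, hw]
  have key2 : (∑ z : ZMod p × ZMod p, K (ι (z.1 * z.2)) (ι (z.1 + z.2)))
      = ∑ w : ZMod p × ZMod p,
          ((univ.filter fun z : ZMod p × ZMod p => (z.1 * z.2, z.1 + z.2) = w).card)
            • K (ι w.1) (ι w.2) := by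
    rw [← Finset.sum_fiberwise univ (fun z : ZMod p × ZMod p => (z.1 * z.2, z.1 + z.2))
      (fun z => K (ι (z.1 * z.2)) (ι (z.1 + z.2)))]
    refine Finset.sum_congr rfl fun w _ => ?_
    rw [Finset.sum_congr rfl (fun z hz => ?_), Finset.sum_const]
    have hw : (z.1 * z.2, z.1 + z.2) = w := (Finset.mem_filter.mp hz).2
    rw [← hw]
  rw [key1, key2, ← Finset.sum_add_distrib]
  refine Finset.sum_congr rfl fun w _ => ?_
  rw [← add_smul]
  have hfe1 : (univ.filter fun α : F => π α = w)
      = (univ.filter fun α : F => α * α ^ p = ι w.1 ∧ α + α ^ p = ι w.2) := by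
    ext α
    simp only [mem_filter, mem_univ, true_and, Prod.ext_iff]
    constructor
    · rintro ⟨e1, e2⟩
      exact ⟨by rw [← hπ1 α]; exact congrArg ι e1, by rw [← hπ2 α]; exact congrArg ι e2⟩
    · rintro ⟨e1, e2⟩
      exact ⟨ι.injective (by rw [hπ1 α, e1]), ι.injective (by rw [hπ2 α, e2])⟩
  have hfe2 : (univ.filter fun z : ZMod p × ZMod p => (z.1 * z.2, z.1 + z.2) = w)
      = (univ.filter fun z : ZMod p × ZMod p => z.1 * z.2 = w.1 ∧ z.1 + z.2 = w.2) := by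
    ext z
    simp [Prod.ext_iff]
  rw [hfe1, hfe2, fiber_count hp2 hF ι w.1 w.2]
  simp [nsmul_eq_mul]

/-- The double sum `S = ∑_{(a,b)} (a(1+b+a)∏ᵢ(αᵢ² + αᵢb + a))^((p-1)/2)` satisfies
`2·ι(S) = ∑_{α ∈ F} (f̃(α)f̃(α^p))^((p-1)/2) + ι(∑_{(α,β)} (f(α)f(β))^((p-1)/2))`,
where `F` has `p²` elements and `f̃` is the image of `f` in `F[X]`. -/
theorem two_mul_double_sum_eq (p : ℕ) [Fact p.Prime] (hp : 5 ≤ p)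
    (α₁ α₂ α₃ : ZMod p)
    (h12 : α₁ ≠ α₂) (h13 : α₁ ≠ α₃) (h23 : α₂ ≠ α₃)
    (h10 : α₁ ≠ 0) (h20 : α₂ ≠ 0) (h30 : α₃ ≠ 0)
    (h11 : α₁ ≠ 1) (h21 : α₂ ≠ 1) (h31 : α₃ ≠ 1)
    (f : Polynomial (ZMod p))
    (hf : f = X * (X - 1) * (X - C α₁) * (X - C α₂) * (X - C α₃))
    (F : Type*) [Field F] [Fintype F] (hF : Fintype.card F = p ^ 2)
    (ι : ZMod p →+* F)
    (S : ZMod p)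
    (hS : S = ∑ z : ZMod p × ZMod p,
      (z.1 * (1 + z.2 + z.1) *
        ((α₁ ^ 2 + α₁ * z.2 + z.1) * (α₂ ^ 2 + α₂ * z.2 + z.1) *
          (α₃ ^ 2 + α₃ * z.2 + z.1))) ^ ((p - 1) / 2)) :
    2 * ι S =
      (∑ α : F, ((f.map ι).eval α * (f.map ι).eval (α ^ p)) ^ ((p - 1) / 2)) +
        ι (∑ z : ZMod p × ZMod p, (f.eval z.1 * f.eval z.2) ^ ((p - 1) / 2)) := by
  classical
  have hp2 : p ≠ 2 := by omega
  set e := (p - 1) / 2 with he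
  set K : F → F → F := fun n s => (n * (1 - s + n) *
    ((ι α₁ ^ 2 - ι α₁ * s + n) * (ι α₂ ^ 2 - ι α₂ * s + n) * (ι α₃ ^ 2 - ι α₃ * s + n))) ^ e
    with hK
  have main := sum_reduce hp2 hF ι K
  -- rewrite the first RHS sum
  have t1 : ∀ α : F, ((f.map ι).eval α * (f.map ι).eval (α ^ p)) ^ e
      = K (α * α ^ p) (α + α ^ p) := by
    intro α
    simp only [hK, hf, Polynomial.map_mul, Polynomial.map_sub, Polynomial.map_X,
      Polynomial.map_one, Polynomial.map_C, eval_mul, eval_sub, eval_X, eval_C, eval_one]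
    congr 1
    ring
  -- rewrite the second RHS sum
  have t2 : ∀ z : ZMod p × ZMod p, ι ((f.eval z.1 * f.eval z.2) ^ e)
      = K (ι (z.1 * z.2)) (ι (z.1 + z.2)) := by
    intro z
    simp only [hK, hf, eval_mul, eval_sub, eval_X, eval_C, eval_one, map_pow, map_mul,
      map_sub, map_add, map_one]
    congr 1
    ring
  -- rewrite the LHS
  have t3 : ι S = ∑ z : ZMod p × ZMod p, K (ι z.1) (ι z.2) := by
    rw [hS, map_sum]
    rw [show (∑ z : ZMod p × ZMod p, ι ((z.1 * (1 + z.2 + z.1) *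
        ((α₁ ^ 2 + α₁ * z.2 + z.1) * (α₂ ^ 2 + α₂ * z.2 + z.1) *
          (α₃ ^ 2 + α₃ * z.2 + z.1))) ^ e))
        = ∑ z : ZMod p × ZMod p, K (ι z.1) (ι (-z.2)) from
      Finset.sum_congr rfl fun z _ => by
        simp only [hK, map_pow, map_mul, map_add, map_one, map_neg]
        congr 1
        ring]
    exact Fintype.sum_equiv (Equiv.prodCongr (Equiv.refl (ZMod p)) (Equiv.neg (ZMod p)))
      (fun z => K (ι z.1) (ι (-z.2))) (fun z => K (ι z.1) (ι z.2)) (fun z => rfl)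
  calc 2 * ι S = ∑ z : ZMod p × ZMod p, 2 * K (ι z.1) (ι z.2) := by
        rw [t3, Finset.mul_sum]
    _ = (∑ α : F, K (α * α ^ p) (α + α ^ p))
        + ∑ z : ZMod p × ZMod p, K (ι (z.1 * z.2)) (ι (z.1 + z.2)) := main.symm
    _ = _ := by
        rw [map_sum]
        congr 1
        · exact Finset.sum_congr rfl fun α _ => (t1 α).symm
        · exact Finset.sum_congr rfl fun z _ => (t2 z).symm
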